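/- Let R = K[x_1,…,x_r, y_1,…,y_s] and let f ∈ K[x_1,…,x_r], g ∈ K[y_1,…,y_s] be products of m_x and m_y linear forms respectively, with F = fg. Let 𝕀_f, 𝕀_g, 𝕀_F be the ideals of (m_x−1)-, (m_y−1)-, and (m_x+m_y−1)-fold products of the respective arrangements. If J_f is a reduction of 𝕀_f with 𝕀_f^r = J_f 𝕀_f^{r−1} and J_g is a reduction of 𝕀_g with 𝕀_g^s = J_g 𝕀_g^{s−1}, then 𝕀_F^{r+s−1} = J_F 𝕀_F^{r+s−2}, i.e., J_F is a reduction of 𝕀_F with reduction number at most r+s−2. -/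

import Mathlib

open MvPolynomial Finset

private lemma pderiv_finset_prod {K : Type*} [CommRing K] {σ ι : Type*} [DecidableEq ι]
    (v : σ) (t : Finset ι) (h : ι → MvPolynomial σ K) :
    pderiv v (∏ j ∈ t, h j) = ∑ k ∈ t, pderiv v (h k) * ∏ j ∈ t.erase k, h j := by
  induction t using Finset.induction_on with
  | empty => simp
  | @insert a t ha ih =>
    rw [Finset.prod_insert ha, pderiv_mul, ih, Finset.sum_insert ha, Finset.erase_insert ha,
      Finset.mul_sum]
    congr 1
    refine Finset.sum_congr rfl fun k hk => ?_
    have hka : a ≠ k := fun hh => ha (hh ▸ hk)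
    rw [Finset.erase_insert_of_ne hka,
      Finset.prod_insert (fun hh => ha (Finset.mem_of_mem_erase hh))]
    ring

private lemma span_c_mul {R : Type*} [CommSemiring R] (c : R) {ι : Type*} (e : ι → R) :
    Ideal.span (Set.range fun k => c * e k) = Ideal.span {c} * Ideal.span (Set.range e) := by
  rw [Ideal.span_mul_span', Set.singleton_mul, ← Set.range_comp]
  rfl

private lemma ideal_sum_le {R : Type*} [CommSemiring R] {ι : Type*} {t : Finset ι}
    {f : ι → Ideal R} {I : Ideal R} (h : ∀ i ∈ t, f i ≤ I) : ∑ i ∈ t, f i ≤ I := by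
  classical
  induction t using Finset.induction_on with
  | empty => simp
  | @insert a t ha ih =>
    rw [Finset.sum_insert ha, Submodule.add_eq_sup]
    exact sup_le (h a (Finset.mem_insert_self a t))
      (ih fun i hi => h i (Finset.mem_insert_of_mem hi))

private lemma red_pow {R : Type*} [CommSemiring R] {I J : Ideal R} {r : ℕ} (hr : 1 ≤ r)
    (h : I ^ r = J * I ^ (r - 1)) {i : ℕ} (hi : r ≤ i) : I ^ i = J * I ^ (i - 1) := by
  obtain ⟨d, rfl⟩ := Nat.exists_eq_add_of_le hi
  rw [pow_add, h, mul_assoc, ← pow_add]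
  have : r - 1 + d = r + d - 1 := by omega
  rw [this]

private lemma ideal_pow_mono {R : Type*} [CommSemiring R] {I J : Ideal R} (h : I ≤ J) (n : ℕ) :
    I ^ n ≤ J ^ n := by
  induction n with
  | zero => simp
  | succ n ih => rw [pow_succ, pow_succ]; exact Ideal.mul_mono ih h

theorem stmt15 {K : Type*} [Field K] [Infinite K] {r s mx my : ℕ}
    (hr : 1 ≤ r) (hs : 1 ≤ s) (hmx : r ≤ mx) (hmy : s ≤ my)
    (a : Fin mx → Fin r → K) (b : Fin my → Fin s → K)
    (lx : Fin mx → MvPolynomial (Fin r ⊕ Fin s) K)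
    (ly : Fin my → MvPolynomial (Fin r ⊕ Fin s) K)
    (hlx : ∀ j, lx j = ∑ i, C (a j i) * X (Sum.inl i))
    (hly : ∀ j, ly j = ∑ i, C (b j i) * X (Sum.inr i))
    (f g : MvPolynomial (Fin r ⊕ Fin s) K)
    (hf : f = ∏ j, lx j) (hg : g = ∏ j, ly j)
    (If Ig IF Jf Jg JF : Ideal (MvPolynomial (Fin r ⊕ Fin s) K))
    (hIf : If = Ideal.span (Set.range fun k => ∏ j ∈ Finset.univ.erase k, lx j))
    (hIg : Ig = Ideal.span (Set.range fun k => ∏ j ∈ Finset.univ.erase k, ly j))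
    (hIF : IF = Ideal.span (Set.range fun k : Fin mx ⊕ Fin my =>
      ∏ j ∈ Finset.univ.erase k, Sum.elim lx ly j))
    (hJf : Jf = Ideal.span (Set.range fun v => pderiv v f))
    (hJg : Jg = Ideal.span (Set.range fun v => pderiv v g))
    (hJF : JF = Ideal.span (Set.range fun v => pderiv v (f * g)))
    (hredf : If ^ r = Jf * If ^ (r - 1))
    (hredg : Ig ^ s = Jg * Ig ^ (s - 1)) :
    IF ^ (r + s - 1) = JF * IF ^ (r + s - 2) := by
  classical
  -- vanishing of cross derivatives
  have hdx : ∀ (v : Fin s) (j : Fin mx), pderiv (Sum.inr v) (lx j) = 0 := by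
    intro v j
    rw [hlx]
    simp [pderiv_C_mul]
  have hdy : ∀ (v : Fin r) (j : Fin my), pderiv (Sum.inl v) (ly j) = 0 := by
    intro v j
    rw [hly]
    simp [pderiv_C_mul]
  have hdf : ∀ v : Fin s, pderiv (Sum.inr v) f = 0 := by
    intro v
    rw [hf, pderiv_finset_prod]
    exact Finset.sum_eq_zero fun k _ => by rw [hdx v k, zero_mul]
  have hdg : ∀ v : Fin r, pderiv (Sum.inl v) g = 0 := by
    intro v
    rw [hg, pderiv_finset_prod]
    exact Finset.sum_eq_zero fun k _ => by rw [hdy v k, zero_mul]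
  -- J ≤ I
  have hJfIf : Jf ≤ If := by
    rw [hJf, Ideal.span_le]
    rintro _ ⟨v, rfl⟩
    simp only [SetLike.mem_coe]
    rw [hf, pderiv_finset_prod]
    refine Ideal.sum_mem _ fun k _ => Ideal.mul_mem_left _ _ ?_
    rw [hIf]
    exact Ideal.subset_span ⟨k, rfl⟩
  have hJgIg : Jg ≤ Ig := by
    rw [hJg, Ideal.span_le]
    rintro _ ⟨v, rfl⟩
    simp only [SetLike.mem_coe]
    rw [hg, pderiv_finset_prod]
    refine Ideal.sum_mem _ fun k _ => Ideal.mul_mem_left _ _ ?_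
    rw [hIg]
    exact Ideal.subset_span ⟨k, rfl⟩
  -- decomposition of IF
  have hsplit : (fun k : Fin mx ⊕ Fin my => ∏ j ∈ Finset.univ.erase k, Sum.elim lx ly j)
      = Sum.elim (fun k0 => g * ∏ j ∈ Finset.univ.erase k0, lx j)
                 (fun k0 => f * ∏ j ∈ Finset.univ.erase k0, ly j) := by
    funext k
    cases k with
    | inl k0 =>
      have hset : (Finset.univ : Finset (Fin mx ⊕ Fin my)).erase (Sum.inl k0)
          = ((Finset.univ.erase k0).map ⟨Sum.inl, Sum.inl_injective⟩) ∪
            ((Finset.univ : Finset (Fin my)).map ⟨Sum.inr, Sum.inr_injective⟩) := by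
        ext x; cases x <;> simp
      have hdisj : Disjoint ((Finset.univ.erase k0).map ⟨Sum.inl, Sum.inl_injective⟩)
          ((Finset.univ : Finset (Fin my)).map ⟨Sum.inr, Sum.inr_injective⟩) := by
        simp [Finset.disjoint_left]
      rw [hset, Finset.prod_union hdisj, Finset.prod_map, Finset.prod_map]
      simp only [Function.Embedding.coeFn_mk, Sum.elim_inl, Sum.elim_inr]
      rw [hg, mul_comm]
    | inr k0 =>
      have hset : (Finset.univ : Finset (Fin mx ⊕ Fin my)).erase (Sum.inr k0)
          = ((Finset.univ : Finset (Fin mx)).map ⟨Sum.inl, Sum.inl_injective⟩) ∪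
            ((Finset.univ.erase k0).map ⟨Sum.inr, Sum.inr_injective⟩) := by
        ext x; cases x <;> simp
      have hdisj : Disjoint ((Finset.univ : Finset (Fin mx)).map ⟨Sum.inl, Sum.inl_injective⟩)
          ((Finset.univ.erase k0).map ⟨Sum.inr, Sum.inr_injective⟩) := by
        simp [Finset.disjoint_left]
      rw [hset, Finset.prod_union hdisj, Finset.prod_map, Finset.prod_map]
      simp only [Function.Embedding.coeFn_mk, Sum.elim_inl, Sum.elim_inr]
      rw [hf]
  have hIFd : IF = Ideal.span {g} * If + Ideal.span {f} * Ig := by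
    rw [hIF, hsplit, Set.Sum.elim_range, Ideal.span_union, span_c_mul, span_c_mul, ← hIf, ← hIg,
      Submodule.add_eq_sup]
  -- decomposition of JF
  have hJFsplit : (fun v : Fin r ⊕ Fin s => pderiv v (f * g))
      = Sum.elim (fun v => g * pderiv (Sum.inl v) f) (fun v => f * pderiv (Sum.inr v) g) := by
    funext v
    cases v with
    | inl v => rw [Sum.elim_inl, pderiv_mul, hdg v, mul_zero, add_zero, mul_comm]
    | inr v => rw [Sum.elim_inr, pderiv_mul, hdf v, zero_mul, zero_add]
  have hJf' : Jf = Ideal.span (Set.range fun v : Fin r => pderiv (Sum.inl v) f) := by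
    rw [hJf]
    have he : (fun v : Fin r ⊕ Fin s => pderiv v f)
        = Sum.elim (fun v : Fin r => pderiv (Sum.inl v) f)
            (fun v : Fin s => pderiv (Sum.inr v) f) := by
      funext v; cases v <;> simp
    have h0 : (Set.range fun v : Fin s => pderiv (Sum.inr v) f) = {0} := by
      haveI : Nonempty (Fin s) := ⟨⟨0, hs⟩⟩
      have : (fun v : Fin s => pderiv (Sum.inr v) f) = fun _ => 0 := funext hdf
      rw [this, Set.range_const]
    rw [he, Set.Sum.elim_range, Ideal.span_union, h0,
      Ideal.span_singleton_eq_bot.mpr rfl, sup_bot_eq]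
  have hJg' : Jg = Ideal.span (Set.range fun v : Fin s => pderiv (Sum.inr v) g) := by
    rw [hJg]
    have he : (fun v : Fin r ⊕ Fin s => pderiv v g)
        = Sum.elim (fun v : Fin r => pderiv (Sum.inl v) g)
            (fun v : Fin s => pderiv (Sum.inr v) g) := by
      funext v; cases v <;> simp
    have h0 : (Set.range fun v : Fin r => pderiv (Sum.inl v) g) = {0} := by
      haveI : Nonempty (Fin r) := ⟨⟨0, hr⟩⟩
      have : (fun v : Fin r => pderiv (Sum.inl v) g) = fun _ => 0 := funext hdg
      rw [this, Set.range_const]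
    rw [he, Set.Sum.elim_range, Ideal.span_union, h0,
      Ideal.span_singleton_eq_bot.mpr rfl, bot_sup_eq]
  have hJFd : JF = Ideal.span {g} * Jf + Ideal.span {f} * Jg := by
    rw [hJF, hJFsplit, Set.Sum.elim_range, Ideal.span_union, span_c_mul, span_c_mul, ← hJf',
      ← hJg', Submodule.add_eq_sup]
  set A := Ideal.span {g} * If with hA
  set B := Ideal.span {f} * Ig with hB
  have hAle : A ≤ IF := by rw [hIFd, Submodule.add_eq_sup]; exact le_sup_left
  have hBle : B ≤ IF := by rw [hIFd, Submodule.add_eq_sup]; exact le_sup_right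
  have hJFle : JF ≤ IF := by
    rw [hJFd, hIFd, Submodule.add_eq_sup, Submodule.add_eq_sup]
    exact sup_le ((Ideal.mul_mono le_rfl hJfIf).trans le_sup_left)
      ((Ideal.mul_mono le_rfl hJgIg).trans le_sup_right)
  set n := r + s - 1 with hn
  have h2 : r + s - 2 = n - 1 := by omega
  have hn1 : 1 ≤ n := by omega
  rw [h2]
  apply le_antisymm
  · have expand : IF ^ n = ∑ k ∈ Finset.range (n + 1),
        A ^ k * B ^ (n - k) * ((n.choose k : ℕ) : Ideal (MvPolynomial (Fin r ⊕ Fin s) K)) := by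
      rw [hIFd, add_pow]
    rw [expand]
    refine ideal_sum_le fun k hk => ?_
    have hk' : k ≤ n := Nat.lt_succ_iff.mp (Finset.mem_range.mp hk)
    refine le_trans Ideal.mul_le_left ?_
    by_cases hkr : r ≤ k
    · have hk1 : 1 ≤ k := hr.trans hkr
      have hIfk : If ^ k = Jf * If ^ (k - 1) := red_pow hr hredf hkr
      have hgpow : Ideal.span {g} ^ k = Ideal.span {g} * Ideal.span {g} ^ (k - 1) := by
        conv_lhs => rw [show k = 1 + (k - 1) by omega]
        rw [pow_add, pow_one]
      have hrw : A ^ k * B ^ (n - k)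
          = (Ideal.span {g} * Jf) * (A ^ (k - 1) * B ^ (n - k)) := by
        rw [hA, mul_pow, mul_pow, hIfk, hgpow]
        ring
      rw [hrw]
      refine Ideal.mul_mono ?_ ?_
      · rw [hJFd, Submodule.add_eq_sup]; exact le_sup_left
      · calc A ^ (k - 1) * B ^ (n - k) ≤ IF ^ (k - 1) * IF ^ (n - k) :=
            Ideal.mul_mono (ideal_pow_mono hAle _) (ideal_pow_mono hBle _)
          _ = IF ^ (n - 1) := by
            rw [← pow_add]
            congr 1
            omega
    · have hks : s ≤ n - k := by omega
      have hk1 : 1 ≤ n - k := hs.trans hks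
      have hIgk : Ig ^ (n - k) = Jg * Ig ^ (n - k - 1) := red_pow hs hredg hks
      have hfpow : Ideal.span {f} ^ (n - k)
          = Ideal.span {f} * Ideal.span {f} ^ (n - k - 1) := by
        conv_lhs => rw [show n - k = 1 + (n - k - 1) by omega]
        rw [pow_add, pow_one]
      have hrw : A ^ k * B ^ (n - k)
          = (Ideal.span {f} * Jg) * (A ^ k * B ^ (n - k - 1)) := by
        rw [hB, mul_pow, mul_pow, hIgk, hfpow]
        ring
      rw [hrw]
      refine Ideal.mul_mono ?_ ?_
      · rw [hJFd, Submodule.add_eq_sup]; exact le_sup_right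
      · calc A ^ k * B ^ (n - k - 1) ≤ IF ^ k * IF ^ (n - k - 1) :=
            Ideal.mul_mono (ideal_pow_mono hAle _) (ideal_pow_mono hBle _)
          _ = IF ^ (n - 1) := by
            rw [← pow_add]
            congr 1
            omega
  · refine le_trans (Ideal.mul_mono hJFle le_rfl) (le_of_eq ?_)
    conv_rhs => rw [show n = (n - 1) + 1 by omega]
    rw [pow_succ, mul_comm]
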